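/- Let α̂(W) = (Ĝ(W) + λI)⁻¹ ĥ(W) where Ĝ and ĥ depend differentiably on a scalar parameter t (an entry of W), with Ĝ symmetric and Ĝ + λI invertible. Then d/dt [ (1/2) α̂ᵀĜα̂ − ĥᵀα̂ ] = α̂ᵀ (dĜ/dt) ( (3/2)α̂ − β̂ ) + (dĥ/dt)ᵀ ( β̂ − 2α̂ ), where β̂ = (Ĝ + λI)⁻¹ Ĝ α̂. -/

import Mathlib

open Matrix


section aux
variable {m : ℕ} {t₀ : ℝ}

lemma aux_hasDerivAt_dot {u v : ℝ → Fin m → ℝ} {u' v' : Fin m → ℝ}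
    (hu : ∀ i, HasDerivAt (fun t => u t i) (u' i) t₀)
    (hv : ∀ i, HasDerivAt (fun t => v t i) (v' i) t₀) :
    HasDerivAt (fun t => u t ⬝ᵥ v t) (u' ⬝ᵥ v t₀ + u t₀ ⬝ᵥ v') t₀ := by
  have H : HasDerivAt (fun t => ∑ i, u t i * v t i)
      (∑ i, (u' i * v t₀ i + u t₀ i * v' i)) t₀ :=
    HasDerivAt.fun_sum fun i _ => (hu i).mul (hv i)
  simpa [dotProduct, Finset.sum_add_distrib] using H

lemma aux_hasDerivAt_inv_entry (A : ℝ → Matrix (Fin m) (Fin m) ℝ)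
    (A' : Matrix (Fin m) (Fin m) ℝ)
    (hunit : ∀ t, IsUnit (A t))
    (hA : ∀ i j, HasDerivAt (fun t => A t i j) (A' i j) t₀) (i j : Fin m) :
    HasDerivAt (fun t => (A t)⁻¹ i j) ((-((A t₀)⁻¹ * A' * (A t₀)⁻¹)) i j) t₀ := by
  letI : NormedRing (Matrix (Fin m) (Fin m) ℝ) := Matrix.linftyOpNormedRing
  letI : NormedAlgebra ℝ (Matrix (Fin m) (Fin m) ℝ) := Matrix.linftyOpNormedAlgebra
  -- pi-valued derivative
  have hP : HasDerivAt (fun t => (fun i j => A t i j : Fin m → Fin m → ℝ))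
      (fun i j => A' i j) t₀ :=
    hasDerivAt_pi.2 fun i => hasDerivAt_pi.2 fun j => hA i j
  let e : (Fin m → Fin m → ℝ) ≃ₗ[ℝ] Matrix (Fin m) (Fin m) ℝ := Matrix.ofLinearEquiv ℝ
  let eL : (Fin m → Fin m → ℝ) →L[ℝ] Matrix (Fin m) (Fin m) ℝ :=
    LinearMap.toContinuousLinearMap e.toLinearMap
  have hM : HasDerivAt A A' t₀ := eL.hasFDerivAt.comp_hasDerivAt t₀ hP
  -- inverse
  set u : (Matrix (Fin m) (Fin m) ℝ)ˣ := (hunit t₀).unit with hu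
  have hux : (u : Matrix (Fin m) (Fin m) ℝ) = A t₀ := (hunit t₀).unit_spec
  have hinv0 : HasFDerivAt Ring.inverse
      (-ContinuousLinearMap.mulLeftRight ℝ _ (↑u⁻¹) (↑u⁻¹)) (A t₀) := by
    rw [← hux]; exact hasFDerivAt_ringInverse u
  have hinv1 : HasDerivAt (fun t => Ring.inverse (A t))
      (-((u⁻¹ : _) * A' * (u⁻¹ : _))) t₀ := by
    have h5 := hinv0.comp_hasDerivAt t₀ hM
    simp only [ContinuousLinearMap.neg_apply, ContinuousLinearMap.mulLeftRight_apply] at h5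
    exact h5
  have huinv : ((u⁻¹ : (Matrix (Fin m) (Fin m) ℝ)ˣ) : Matrix (Fin m) (Fin m) ℝ) = (A t₀)⁻¹ := by
    rw [Matrix.nonsing_inv_eq_ringInverse, ← hux, Ring.inverse_unit]
  have hinv2 : HasDerivAt (fun t => (A t)⁻¹) (-((A t₀)⁻¹ * A' * (A t₀)⁻¹)) t₀ := by
    rw [← huinv]
    have : (fun t => (A t)⁻¹) = fun t => Ring.inverse (A t) := by
      funext t; rw [Matrix.nonsing_inv_eq_ringInverse]
    rw [this]; exact hinv1
  -- back to entries
  let eL' : Matrix (Fin m) (Fin m) ℝ →L[ℝ] (Fin m → Fin m → ℝ) :=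
    LinearMap.toContinuousLinearMap e.symm.toLinearMap
  have := eL'.hasFDerivAt.comp_hasDerivAt t₀ hinv2
  exact hasDerivAt_pi.1 (hasDerivAt_pi.1 this i) j

lemma aux_hasDerivAt_mulVec {M : ℝ → Matrix (Fin m) (Fin m) ℝ} {v : ℝ → Fin m → ℝ}
    {M' : Matrix (Fin m) (Fin m) ℝ} {v' : Fin m → ℝ}
    (hM : ∀ i j, HasDerivAt (fun t => M t i j) (M' i j) t₀)
    (hv : ∀ i, HasDerivAt (fun t => v t i) (v' i) t₀) (i : Fin m) :
    HasDerivAt (fun t => (M t *ᵥ v t) i) ((M' *ᵥ v t₀ + M t₀ *ᵥ v') i) t₀ := by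
  have := aux_hasDerivAt_dot (u := fun t => M t i) (v := v) (u' := M' i) (v' := v') (hM i) hv
  simpa [mulVec, dotProduct] using this

lemma aux_dot_symm_swap {M : Matrix (Fin m) (Fin m) ℝ} (hM : Mᵀ = M) (x y : Fin m → ℝ) :
    x ⬝ᵥ (M *ᵥ y) = (M *ᵥ x) ⬝ᵥ y := by
  rw [Matrix.dotProduct_mulVec, ← Matrix.mulVec_transpose, hM]

end aux

/-- for α̂(t) = (Ĝ(t)+λI)⁻¹ĥ(t), β̂ = (Ĝ+λI)⁻¹Ĝα̂, the objective
    (1/2)α̂ᵀĜα̂ − ĥᵀα̂ has derivative α̂ᵀ Ĝ' ((3/2)α̂ − β̂) + ĥ'ᵀ(β̂ − 2α̂). -/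
theorem sce_estimator_derivative
    {m : ℕ} (G : ℝ → Matrix (Fin m) (Fin m) ℝ) (h : ℝ → (Fin m → ℝ))
    (G' : Matrix (Fin m) (Fin m) ℝ) (h' : Fin m → ℝ) (l t₀ : ℝ) (hl : 0 < l)
    (hGsymm : ∀ t, (G t)ᵀ = G t)
    (hGinv : ∀ t, IsUnit (G t + l • (1 : Matrix (Fin m) (Fin m) ℝ)))
    (hG : ∀ i j, HasDerivAt (fun t => G t i j) (G' i j) t₀)
    (hh : ∀ j, HasDerivAt (fun t => h t j) (h' j) t₀) :
    HasDerivAt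
      (fun t =>
        (1 / 2) * (((G t + l • (1 : Matrix (Fin m) (Fin m) ℝ))⁻¹ *ᵥ h t) ⬝ᵥ
            (G t *ᵥ ((G t + l • (1 : Matrix (Fin m) (Fin m) ℝ))⁻¹ *ᵥ h t)))
          - h t ⬝ᵥ ((G t + l • (1 : Matrix (Fin m) (Fin m) ℝ))⁻¹ *ᵥ h t))
      ((((G t₀ + l • (1 : Matrix (Fin m) (Fin m) ℝ))⁻¹ *ᵥ h t₀) ⬝ᵥ
          (G' *ᵥ ((3 / 2 : ℝ) • ((G t₀ + l • (1 : Matrix (Fin m) (Fin m) ℝ))⁻¹ *ᵥ h t₀)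
            - (G t₀ + l • (1 : Matrix (Fin m) (Fin m) ℝ))⁻¹ *ᵥ
                (G t₀ *ᵥ ((G t₀ + l • (1 : Matrix (Fin m) (Fin m) ℝ))⁻¹ *ᵥ h t₀)))))
        + h' ⬝ᵥ ((G t₀ + l • (1 : Matrix (Fin m) (Fin m) ℝ))⁻¹ *ᵥ
              (G t₀ *ᵥ ((G t₀ + l • (1 : Matrix (Fin m) (Fin m) ℝ))⁻¹ *ᵥ h t₀))
            - (2 : ℝ) • ((G t₀ + l • (1 : Matrix (Fin m) (Fin m) ℝ))⁻¹ *ᵥ h t₀)))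
      t₀ := by
  set A : ℝ → Matrix (Fin m) (Fin m) ℝ := fun t => G t + l • (1 : Matrix (Fin m) (Fin m) ℝ)
    with hAdef
  have hA : ∀ i j, HasDerivAt (fun t => A t i j) (G' i j) t₀ := by
    intro i j
    simpa [hAdef] using (hG i j).add_const ((l • (1 : Matrix (Fin m) (Fin m) ℝ)) i j)
  set B : Matrix (Fin m) (Fin m) ℝ := (A t₀)⁻¹ with hBdef
  set α : ℝ → Fin m → ℝ := fun t => (A t)⁻¹ *ᵥ h t with hαdef
  set α0 : Fin m → ℝ := α t₀ with hα0
  set β : Fin m → ℝ := B *ᵥ (G t₀ *ᵥ α0) with hβ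
  -- symmetry facts
  have hG'symm : G'ᵀ = G' := by
    ext i j
    have hfun : (fun t => G t j i) = fun t => G t i j := by
      funext t
      have h3 := congrFun (congrFun (hGsymm t) i) j
      rwa [Matrix.transpose_apply] at h3
    have h2 : HasDerivAt (fun t => G t i j) (G' j i) t₀ := hfun ▸ hG j i
    exact h2.unique (hG i j)
  have hAsymm : (A t₀)ᵀ = A t₀ := by
    simp [hAdef, transpose_add, transpose_smul, hGsymm t₀]
  have hBsymm : Bᵀ = B := by
    rw [hBdef, Matrix.transpose_nonsing_inv, hAsymm]
  -- derivative of α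
  set α' : Fin m → ℝ := (-(B * G' * B)) *ᵥ h t₀ + B *ᵥ h' with hα'
  have hαd : ∀ i, HasDerivAt (fun t => α t i) (α' i) t₀ := by
    intro i
    exact aux_hasDerivAt_mulVec (aux_hasDerivAt_inv_entry A G' hGinv hA) hh i
  -- derivative of the objective
  have hGα : ∀ i, HasDerivAt (fun t => (G t *ᵥ α t) i) ((G' *ᵥ α0 + G t₀ *ᵥ α') i) t₀ :=
    aux_hasDerivAt_mulVec hG hαd
  have d1 : HasDerivAt (fun t => α t ⬝ᵥ (G t *ᵥ α t))
      (α' ⬝ᵥ (G t₀ *ᵥ α0) + α0 ⬝ᵥ (G' *ᵥ α0 + G t₀ *ᵥ α')) t₀ :=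
    aux_hasDerivAt_dot hαd hGα
  have d2 : HasDerivAt (fun t => h t ⬝ᵥ α t) (h' ⬝ᵥ α0 + h t₀ ⬝ᵥ α') t₀ :=
    aux_hasDerivAt_dot hh hαd
  have dtot := (d1.const_mul (1/2 : ℝ)).sub d2
  convert dtot using 1
  case e'_4 => rfl
  case e'_5 => rfl
  case e'_8 => rfl
  -- now the algebraic identity
  have hα'eq : α' = -(B *ᵥ (G' *ᵥ α0)) + B *ᵥ h' := by
    rw [hα', Matrix.neg_mulVec, ← Matrix.mulVec_mulVec, ← Matrix.mulVec_mulVec, hα0, hαdef]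
  have hBα : B *ᵥ h t₀ = α0 := rfl
  set s1 : ℝ := α0 ⬝ᵥ (G' *ᵥ α0) with hs1
  set s2 : ℝ := α0 ⬝ᵥ (G' *ᵥ β) with hs2
  set s3 : ℝ := h' ⬝ᵥ β with hs3
  set s4 : ℝ := h' ⬝ᵥ α0 with hs4
  have e1 : α' ⬝ᵥ (G t₀ *ᵥ α0) = -s2 + s3 := by
    rw [hα'eq, add_dotProduct, neg_dotProduct]
    congr 1
    · rw [← aux_dot_symm_swap hBsymm, ← hβ, ← aux_dot_symm_swap hG'symm]
    · rw [← aux_dot_symm_swap hBsymm, ← hβ, hs3]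
  have e2 : α0 ⬝ᵥ (G t₀ *ᵥ α') = -s2 + s3 := by
    rw [aux_dot_symm_swap (hGsymm t₀), dotProduct_comm, ← e1]
  have e3 : h t₀ ⬝ᵥ α' = -s1 + s4 := by
    rw [hα'eq, dotProduct_add, dotProduct_neg]
    congr 1
    · rw [aux_dot_symm_swap hBsymm, hBα, hs1]
    · rw [aux_dot_symm_swap hBsymm, hBα, hs4, dotProduct_comm]
  rw [dotProduct_add, e1, e2, e3]
  rw [Matrix.mulVec_sub, Matrix.mulVec_smul, dotProduct_sub, dotProduct_smul,
    dotProduct_sub, dotProduct_smul, hBα]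
  simp only [← hs1, ← hs2, ← hs3, ← hs4, smul_eq_mul]
  ring
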